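/- Let $X\subset\mathbb{R}^N$ be compact, $\mu$ a finite Borel measure on $X$, and $\phi:X\to\mathbb{R}^k$ continuous. If there exists a Borel set $X_\phi\subset X$ of full $\mu$-measure on which $\phi$ is injective, then for $\mu$-almost every $x\in X$ the conditional measure $\mu_{\phi(x)}$ (from the disintegration of $\mu$ with respect to $\phi$) equals the Dirac mass $\delta_x$. Conversely, if $\mu_{\phi(x)}=\delta_x$ for $\mu$-almost every $x$, then $\phi$ is injective on a Borel set of full $\mu$-measure. -/

import Mathlib

open MeasureTheory Set

theorem eq_dirac_of_singleton {α : Type*} [MeasurableSpace α] [MeasurableSingletonClass α]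
    (ν : Measure α) [IsProbabilityMeasure ν] (x : α) (h : ν {x}ᶜ = 0) :
    ν = Measure.dirac x := by
  ext A hA
  rw [Measure.dirac_apply' _ hA]
  by_cases hx : x ∈ A
  · have h1 : ν {x} = 1 := by
      have := measure_add_measure_compl (μ := ν) (measurableSet_singleton x)
      simp [h, measure_univ] at this
      simpa using this
    have hle : ν A ≤ 1 := prob_le_one
    have hge : (1:ENNReal) ≤ ν A := h1 ▸ measure_mono (singleton_subset_iff.2 hx)
    simp [hx, le_antisymm hle hge]
  · have : A ⊆ {x}ᶜ := fun a ha => by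
      simp only [mem_compl_iff, mem_singleton_iff]; rintro rfl; exact hx ha
    simp [hx, measure_mono_null this h]

/-- For a probability measure `μ` on a compact set `X ⊆ ℝ^N`, a continuous map
`φ : X → ℝ^k`, and a system `ν` of conditional measures of `μ` with respect to `φ`
(Rokhlin disintegration), `φ` is injective on some Borel set of full `μ`-measure if and
only if `ν (φ x) = δ_x` for `μ`-almost every `x ∈ X`. -/
theorem as_injectivity_iff_dirac_conditionals (N k : ℕ)
    (X : Set (EuclideanSpace ℝ (Fin N))) (hX : IsCompact X)
    (μ : Measure (EuclideanSpace ℝ (Fin N))) [IsProbabilityMeasure μ] (hμX : μ Xᶜ = 0)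
    (φ : EuclideanSpace ℝ (Fin N) → EuclideanSpace ℝ (Fin k)) (hφ : Continuous φ)
    (ν : EuclideanSpace ℝ (Fin k) → Measure (EuclideanSpace ℝ (Fin N)))
    -- (i) `ν y` is a measure on `X ∩ φ⁻¹({y})`
    (hνfiber : ∀ y, ν y (X ∩ φ ⁻¹' {y})ᶜ = 0)
    -- (ii) `ν y` is a probability measure for `φμ`-a.e. `y`
    (hνprob : ∀ᵐ y ∂(μ.map φ), IsProbabilityMeasure (ν y))
    -- (iii) measurability and the disintegration identity
    (hνmeas : ∀ A : Set (EuclideanSpace ℝ (Fin N)), MeasurableSet A →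
      Measurable (fun y => ν y A) ∧ μ A = ∫⁻ y, ν y A ∂(μ.map φ)) :
    (∃ Xφ, Xφ ⊆ X ∧ MeasurableSet Xφ ∧ μ Xφᶜ = 0 ∧ Set.InjOn φ Xφ) ↔
      (∀ᵐ x ∂μ, ν (φ x) = Measure.dirac x) := by
  have hφm : Measurable φ := hφ.measurable
  constructor
  · rintro ⟨Xφ, hsub, hmeas, hnull, hinj⟩
    -- ν y Xφᶜ = 0 for φμ-a.e. y
    obtain ⟨hm, hint⟩ := hνmeas Xφᶜ hmeas.compl
    rw [hnull] at hint
    have hzero : ∀ᵐ y ∂(μ.map φ), ν y Xφᶜ = 0 :=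
      (lintegral_eq_zero_iff hm).1 hint.symm
    -- pull back to μ
    have h1 : ∀ᵐ x ∂μ, ν (φ x) Xφᶜ = 0 := ae_of_ae_map hφm.aemeasurable hzero
    have h2 : ∀ᵐ x ∂μ, IsProbabilityMeasure (ν (φ x)) :=
      ae_of_ae_map hφm.aemeasurable hνprob
    have h3 : ∀ᵐ x ∂μ, x ∈ Xφ := by
      rw [ae_iff]; exact hnull
    filter_upwards [h1, h2, h3] with x hx1 hx2 hx3
    have := hx2
    apply eq_dirac_of_singleton
    -- {x}ᶜ ⊆ Xφᶜ ∪ (X ∩ φ⁻¹{φ x})ᶜ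
    have hsub2 : ({x}ᶜ : Set _) ⊆ Xφᶜ ∪ (X ∩ φ ⁻¹' {φ x})ᶜ := by
      intro a ha
      by_cases haφ : a ∈ Xφ
      · right
        intro ⟨_, haf⟩
        exact ha (hinj haφ hx3 haf)
      · exact Or.inl haφ
    exact measure_mono_null hsub2
      (le_antisymm (le_trans (measure_union_le _ _) (by rw [hx1, hνfiber (φ x)]; simp))
        zero_le)
  · intro h
    rw [ae_iff] at h
    obtain ⟨t, hts, htm, htn⟩ := exists_measurable_superset_of_null h
    obtain ⟨t', hts', htm', htn'⟩ := exists_measurable_superset_of_null hμX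
    refine ⟨tᶜ ∩ t'ᶜ, ?_, (htm.compl.inter htm'.compl), ?_, ?_⟩
    · intro a ⟨_, ha'⟩
      by_contra hc
      exact ha' (hts' hc)
    · rw [compl_inter, compl_compl, compl_compl]
      exact le_antisymm (le_trans (measure_union_le _ _) (by rw [htn, htn']; simp))
        zero_le
    · intro a ⟨ha, _⟩ b ⟨hb, _⟩ hab
      have ha' : ν (φ a) = Measure.dirac a := by
        by_contra hc; exact ha (hts hc)
      have hb' : ν (φ b) = Measure.dirac b := by
        by_contra hc; exact hb (hts hc)
      have : Measure.dirac a = Measure.dirac b := by rw [← ha', ← hb', hab]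
      have := congrArg (fun m : Measure (EuclideanSpace ℝ (Fin N)) => m {a}) this
      simp only [Measure.dirac_apply' _ (measurableSet_singleton a)] at this
      by_contra hne
      simp [indicator_apply, Ne.symm hne] at this
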